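/- Fix an integer N ≥ 3, parameters λ_1, λ_2, … in [0,1], and let ρ_1 = p_1|ψ⟩⟨ψ| + p_2|0…0⟩⟨0…0| + p_3|1…1⟩⟨1…1| with |ψ⟩ = √α|0…0⟩ + √(1−α)|1…1⟩, α ∈ (0,1), p_1 > 0, p_2, p_3 ≥ 0, p_1+p_2+p_3 = 1, and ρ_k = (id ⊗ Φ_{λ_{k−1}})(ρ_{k−1}) for k ≥ 2 (the map acting on the N-th qubit). Then for every k ≥ 1, Tr(W^{λ_k} ρ_k) = 1 − ∏_{j=1}^{k−1} (1+√(1−λ_j²))/2 − 2p_1√(α(1−α))·λ_k/2^{k−1}; hence Tr(W^{λ_k} ρ_k) < 0 if and only if λ_k > (2^{k−1}/(2p_1√(α(1−α))))·[1 − ∏_{j=1}^{k−1} (1+√(1−λ_j²))/2]. -/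
import Mathlib


open Matrix
open scoped ComplexOrder

noncomputable section

/-- The space of operators on `N` qubits: complex `2^N × 2^N` matrices, with the
`N`-fold tensor-product structure made explicit by indexing rows and columns by
functions `Fin N → Fin 2`. -/
abbrev QM (N : ℕ) := Matrix (Fin N → Fin 2) (Fin N → Fin 2) ℂ

/-- The Pauli matrix σ_x. -/
def sigx : Matrix (Fin 2) (Fin 2) ℂ := !![0, 1; 1, 0]

/-- The Pauli matrix σ_z. -/
def sigz : Matrix (Fin 2) (Fin 2) ℂ := !![1, 0; 0, -1]

/-- The tensor (Kronecker) product `f 0 ⊗ f 1 ⊗ ⋯ ⊗ f (N-1)` of single-qubit operators. -/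
def tensorAll (N : ℕ) (f : Fin N → Matrix (Fin 2) (Fin 2) ℂ) : QM N :=
  Matrix.of fun v w => ∏ i, f i (v i) (w i)

/-- The single-qubit operator `M` acting on qubit `m`, tensored with the identity
on all other qubits. -/
def site (N : ℕ) (m : Fin N) (M : Matrix (Fin 2) (Fin 2) ℂ) : QM N :=
  tensorAll N (fun i => if i = m then M else 1)

/-- GHZ stabilizer generator `S_1 = σ_x^(1) σ_x^(2) ⋯ σ_x^(N)`. -/
def ghzS1 (N : ℕ) : QM N := tensorAll N (fun _ => sigx)

/-- GHZ stabilizer generator with σ_z on qubits `m-1` and `m` (0-based `m : Fin N`,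
`m ≠ 0`); it represents the 1-based generator `S_{m+1} = σ_z^{(m)} σ_z^{(m+1)}`. -/
def ghzSz (N : ℕ) (m : Fin N) : QM N :=
  tensorAll N (fun i => if i.val = m.val - 1 ∨ i = m then sigz else 1)

/-- The product `∏_{m=2}^{N} (I + S_m)/2` appearing in the GHZ witness
(the factors pairwise commute, so the list ordering is immaterial). -/
def ghzProd (N : ℕ) : QM N :=
  (((List.finRange N).filter (fun m => m.val ≠ 0)).map
    (fun m => (1/2 : ℂ) • ((1 : QM N) + ghzSz N m))).prod

/-- The GHZ genuine-multipartite-entanglement witness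
`W = 3 I − 2 [ (I + S_1)/2 + ∏_{m=2}^N (I + S_m)/2 ]`. -/
def ghzWitness (N : ℕ) : QM N :=
  (3 : ℂ) • (1 : QM N) -
    (2 : ℂ) • ((1/2 : ℂ) • ((1 : QM N) + ghzS1 N) + ghzProd N)

/-- The modified (unsharp) GHZ witness
`W^λ = 3 I − 2 [ (I + λ S_1)/2 + ∏_{m=2}^N (I + S_m)/2 ]`. -/
def ghzWitnessMod (N : ℕ) (lam : ℝ) : QM N :=
  (3 : ℂ) • (1 : QM N) -
    (2 : ℂ) • ((1/2 : ℂ) • ((1 : QM N) + (lam : ℂ) • ghzS1 N) + ghzProd N)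

/-- The rank-one projector `|ψ⟩⟨ψ|` onto a vector `ψ`. -/
def outer (N : ℕ) (ψ : (Fin N → Fin 2) → ℂ) : QM N :=
  Matrix.vecMulVec ψ (star ψ)

/-- The computational basis vector `|0…0⟩ = |0⟩^{⊗N}`. -/
def allZero (N : ℕ) : (Fin N → Fin 2) → ℂ := fun v => if ∀ i, v i = 0 then 1 else 0

/-- The computational basis vector `|1…1⟩ = |1⟩^{⊗N}`. -/
def allOne (N : ℕ) : (Fin N → Fin 2) → ℂ := fun v => if ∀ i, v i = 1 then 1 else 0

/-- The generalized GHZ state vector `|ψ⟩ = √α |0…0⟩ + √(1−α) |1…1⟩`. -/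
def genGhzVec (N : ℕ) (α : ℝ) : (Fin N → Fin 2) → ℂ := fun v =>
  if ∀ i, v i = 0 then ((Real.sqrt α : ℝ) : ℂ)
  else if ∀ i, v i = 1 then ((Real.sqrt (1 - α) : ℝ) : ℂ) else 0

/-- The mixed state `ρ₁ = p₁|ψ⟩⟨ψ| + p₂|0…0⟩⟨0…0| + p₃|1…1⟩⟨1…1|`. -/
def mixedState (N : ℕ) (α p₁ p₂ p₃ : ℝ) : QM N :=
  (p₁ : ℂ) • outer N (genGhzVec N α) + (p₂ : ℂ) • outer N (allZero N)
    + (p₃ : ℂ) • outer N (allOne N)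

/-- The single-qubit unsharp-measurement channel
`Φ_λ(ρ) = ((2+√(1−λ²))/4)ρ + (1/4)σ_z ρ σ_z + ((1−√(1−λ²))/4)σ_x ρ σ_x`, applied to
qubit `m` of an `N`-qubit operator (and acting as the identity on the other qubits). -/
def phiMap (N : ℕ) (m : Fin N) (lam : ℝ) (ρ : QM N) : QM N :=
  (((2 + Real.sqrt (1 - lam ^ 2)) / 4 : ℝ) : ℂ) • ρ
    + (1/4 : ℂ) • (site N m sigz * ρ * site N m sigz)
    + (((1 - Real.sqrt (1 - lam ^ 2)) / 4 : ℝ) : ℂ) • (site N m sigx * ρ * site N m sigx)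

/- ===== auxiliary development ===== -/
section Aux

open Finset

lemma bit01 (b : Fin 2) : b = 0 ∨ b = 1 := by fin_cases b <;> simp

lemma bit_flip_flip (b : Fin 2) : b + 1 + 1 = b := by fin_cases b <;> rfl

lemma sigx_apply (a b : Fin 2) : sigx a b = if b = a + 1 then 1 else 0 := by
  fin_cases a <;> fin_cases b <;> simp [sigx]

/-- diagonal values of σ_z -/
def zvC : Fin 2 → ℂ := fun b => if b = 0 then 1 else -1

lemma sigz_eq : sigz = Matrix.diagonal zvC := by
  ext a b
  fin_cases a <;> fin_cases b <;>
    simp [sigz, zvC, Matrix.diagonal_apply]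

lemma zvC_mul_self (b : Fin 2) : zvC b * zvC b = 1 := by fin_cases b <;> norm_num [zvC]

lemma zvC_flip_mul (b : Fin 2) : zvC (b + 1) * zvC b = -1 := by
  fin_cases b <;> norm_num [zvC, show (1:Fin 2)+1 = 0 from rfl]

variable {N : ℕ}

/-- global bit flip -/
def flipAll (v : Fin N → Fin 2) : Fin N → Fin 2 := fun i => v i + 1

/-- flip at one site -/
def flipAt (m : Fin N) (v : Fin N → Fin 2) : Fin N → Fin 2 :=
  Function.update v m (v m + 1)

lemma flipAt_flipAt (m : Fin N) (v : Fin N → Fin 2) : flipAt m (flipAt m v) = v := by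
  funext i
  by_cases h : i = m
  · subst h
    simp [flipAt, bit_flip_flip]
  · simp [flipAt, Function.update_of_ne h]

lemma flipAll_flipAt (m : Fin N) (v : Fin N → Fin 2) :
    flipAll (flipAt m v) = flipAt m (flipAll v) := by
  funext i
  by_cases h : i = m
  · subst h; simp [flipAll, flipAt]
  · simp [flipAll, flipAt, Function.update_of_ne h]

lemma ghzS1_apply (v w : Fin N → Fin 2) :
    ghzS1 N v w = if w = flipAll v then 1 else 0 := by
  simp only [ghzS1, tensorAll, Matrix.of_apply]
  by_cases h : w = flipAll v
  · subst h
    simp [flipAll, sigx_apply]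
  · rw [if_neg h]
    obtain ⟨j, hj⟩ : ∃ j, w j ≠ v j + 1 := by
      by_contra hc; push_neg at hc; exact h (funext hc)
    exact Finset.prod_eq_zero (Finset.mem_univ j) (by rw [sigx_apply, if_neg hj])

lemma tensorAll_diagonal (d : Fin N → Fin 2 → ℂ) :
    tensorAll N (fun i => Matrix.diagonal (d i))
      = Matrix.diagonal (fun v => ∏ i, d i (v i)) := by
  ext v w
  by_cases h : v = w
  · subst h; simp [tensorAll, Matrix.diagonal_apply_eq]
  · obtain ⟨j, hj⟩ : ∃ j, v j ≠ w j := by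
      by_contra hc; push_neg at hc; exact h (funext hc)
    rw [Matrix.diagonal_apply_ne _ h]
    simp only [tensorAll, Matrix.of_apply]
    exact Finset.prod_eq_zero (Finset.mem_univ j) (Matrix.diagonal_apply_ne _ hj)

lemma site_sigz_eq (m : Fin N) :
    site N m sigz = Matrix.diagonal (fun v => zvC (v m)) := by
  have h1 : (fun i : Fin N => if i = m then sigz else 1)
      = fun i => Matrix.diagonal (fun b => if i = m then zvC b else 1) := by
    funext i
    split_ifs with h
    · exact sigz_eq
    · simp [Matrix.diagonal_one]
  rw [site, h1, tensorAll_diagonal]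
  congr 1
  funext v
  simp

lemma site_sigx_apply (m : Fin N) (v w : Fin N → Fin 2) :
    site N m sigx v w = if w = flipAt m v then 1 else 0 := by
  simp only [site, tensorAll, Matrix.of_apply]
  by_cases h : w = flipAt m v
  · subst h
    rw [if_pos rfl, Finset.prod_eq_one]
    intro i _
    by_cases hi : i = m
    · subst hi; simp [flipAt, sigx_apply]
    · simp [hi, flipAt, Function.update_of_ne hi, Matrix.one_apply]
  · rw [if_neg h]
    obtain ⟨j, hj⟩ : ∃ j, w j ≠ flipAt m v j := by
      by_contra hc; push_neg at hc; exact h (funext hc)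
    refine Finset.prod_eq_zero (Finset.mem_univ j) ?_
    by_cases hjm : j = m
    · subst hjm
      rw [if_pos rfl, sigx_apply, if_neg]
      rw [flipAt, Function.update_self] at hj
      exact hj
    · rw [if_neg hjm, Matrix.one_apply, if_neg]
      rw [flipAt, Function.update_of_ne hjm] at hj
      exact fun hc => hj hc.symm

lemma X_mul_apply (m : Fin N) (M : QM N) (v w : Fin N → Fin 2) :
    (site N m sigx * M) v w = M (flipAt m v) w := by
  rw [Matrix.mul_apply]
  simp only [site_sigx_apply, ite_mul, one_mul, zero_mul]
  rw [Finset.sum_ite_eq' Finset.univ (flipAt m v) (fun u => M u w)]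
  simp

lemma mul_X_apply (m : Fin N) (M : QM N) (v w : Fin N → Fin 2) :
    (M * site N m sigx) v w = M v (flipAt m w) := by
  rw [Matrix.mul_apply]
  have h : ∀ u, site N m sigx u w = if u = flipAt m w then 1 else 0 := by
    intro u
    rw [site_sigx_apply]
    congr 1
    simp only [eq_iff_iff]
    constructor
    · intro h; rw [h, flipAt_flipAt]
    · intro h; rw [h, flipAt_flipAt]
  simp only [h, mul_ite, mul_one, mul_zero]
  rw [Finset.sum_ite_eq' Finset.univ (flipAt m w) (fun u => M v u)]
  simp

lemma XMX_apply (m : Fin N) (M : QM N) (v w : Fin N → Fin 2) :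
    (site N m sigx * M * site N m sigx) v w = M (flipAt m v) (flipAt m w) := by
  rw [mul_X_apply, X_mul_apply]

lemma ZMZ_apply (m : Fin N) (M : QM N) (v w : Fin N → Fin 2) :
    (site N m sigz * M * site N m sigz) v w = zvC (v m) * M v w * zvC (w m) := by
  rw [site_sigz_eq, Matrix.mul_diagonal, Matrix.diagonal_mul]

end Aux
section Aux2
open Finset

variable {N : ℕ}

/-- predecessor index -/
def prevIdx (m : Fin N) : Fin N := ⟨m.1 - 1, lt_of_le_of_lt (Nat.sub_le _ _) m.2⟩

lemma list_prod_diagonal {β : Type*} (l : List β) (d : β → (Fin N → Fin 2) → ℂ) :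
    (l.map (fun m => Matrix.diagonal (d m))).prod
      = Matrix.diagonal (fun v => (l.map (fun m => d m v)).prod) := by
  induction l with
  | nil => simp [Matrix.diagonal_one]
  | cons a t ih =>
      simp only [List.map_cons, List.prod_cons, ih, Matrix.diagonal_mul_diagonal]

lemma ghz_factor_eq (m : Fin N) (hm : m.val ≠ 0) :
    (1/2 : ℂ) • ((1 : QM N) + ghzSz N m)
      = Matrix.diagonal (fun v => if v (prevIdx m) = v m then 1 else 0) := by
  have hpm : prevIdx m ≠ m := by
    simp only [prevIdx, Fin.ne_iff_vne]
    omega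
  have hz : ghzSz N m = Matrix.diagonal (fun v => zvC (v (prevIdx m)) * zvC (v m)) := by
    have h1 : (fun i : Fin N => if i.val = m.val - 1 ∨ i = m then sigz else 1)
        = fun i => Matrix.diagonal (fun b => if i.val = m.val - 1 ∨ i = m then zvC b else 1) := by
      funext i
      split_ifs with h
      · exact sigz_eq
      · simp [Matrix.diagonal_one]
    rw [ghzSz, h1, tensorAll_diagonal]
    refine congrArg Matrix.diagonal (funext fun v => ?_)
    rw [← Finset.prod_filter]
    have hset : Finset.univ.filter (fun i : Fin N => i.val = m.val - 1 ∨ i = m)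
        = {prevIdx m, m} := by
      ext i
      simp only [Finset.mem_filter, Finset.mem_univ, true_and, Finset.mem_insert,
        Finset.mem_singleton]
      constructor
      · rintro (h | h)
        · left; simp only [prevIdx, Fin.ext_iff]; exact h
        · right; exact h
      · rintro (h | h)
        · left; rw [h]; rfl
        · right; exact h
    rw [hset, Finset.prod_pair hpm]
  rw [hz]
  ext v w
  by_cases h : v = w
  · subst h
    simp only [Matrix.smul_apply, Matrix.add_apply, Matrix.one_apply_eq,
      Matrix.diagonal_apply_eq, smul_eq_mul]
    rcases bit01 (v (prevIdx m)) with h1 | h1 <;>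
      rcases bit01 (v m) with h2 | h2 <;>
      rw [h1, h2] <;> norm_num [zvC]
  · simp [Matrix.diagonal_apply_ne _ h, Matrix.one_apply_ne h]

lemma ghzProd_eq (hN : 0 < N) :
    ghzProd N = Matrix.diagonal (fun v => if ∀ i j, v i = v j then 1 else 0) := by
  rw [ghzProd]
  have h1 : (((List.finRange N).filter (fun m => m.val ≠ 0)).map
      (fun m => (1/2 : ℂ) • ((1 : QM N) + ghzSz N m)))
      = (((List.finRange N).filter (fun m => m.val ≠ 0)).map
      (fun m => Matrix.diagonal (fun v => if v (prevIdx m) = v m then 1 else 0))) := by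
    apply List.map_congr_left
    intro m hm
    have hm0 : m.val ≠ 0 := by
      have := (List.mem_filter.mp hm).2
      simpa using this
    exact ghz_factor_eq m hm0
  rw [h1, list_prod_diagonal]
  refine congrArg Matrix.diagonal (funext fun v => ?_)
  by_cases hc : ∀ i j, v i = v j
  · rw [if_pos hc, List.prod_eq_one]
    intro x hx
    obtain ⟨m, _, rfl⟩ := List.mem_map.mp hx
    rw [if_pos (hc _ _)]
  · rw [if_neg hc]
    have hadj : ¬ ∀ m : Fin N, m.val ≠ 0 → v (prevIdx m) = v m := by
      intro hall
      apply hc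
      have key : ∀ k, ∀ hk : k < N, v ⟨k, hk⟩ = v ⟨0, hN⟩ := by
        intro k
        induction k with
        | zero => intro hk; rfl
        | succ n ih =>
            intro hk
            have h2 : v (prevIdx ⟨n+1, hk⟩) = v ⟨n+1, hk⟩ :=
              hall ⟨n+1, hk⟩ (by simp)
            have h3 : prevIdx (⟨n+1, hk⟩ : Fin N) = ⟨n, by omega⟩ := by
              simp [prevIdx]
            rw [h3] at h2
            rw [← h2]
            exact ih (by omega)
      intro i j
      have hi := key i.1 i.2
      have hj := key j.1 j.2
      simp only [Fin.eta] at hi hj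
      rw [hi, hj]
    push_neg at hadj
    obtain ⟨m, hm0, hmv⟩ := hadj
    apply List.prod_eq_zero
    refine List.mem_map.mpr ⟨m, ?_, by rw [if_neg hmv]⟩
    exact List.mem_filter.mpr ⟨List.mem_finRange m, by simpa using hm0⟩

end Aux2
section Aux3
open Finset

variable {N : ℕ}

/-- constancy indicator -/
def dPfun : (Fin N → Fin 2) → ℂ := fun v => if ∀ i j, v i = v j then 1 else 0

def XtrF (ρ : QM N) : ℂ := ∑ v, ρ (flipAll v) v
def DtrF (ρ : QM N) : ℂ := ∑ v, dPfun v * ρ v v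
def EtrF (m : Fin N) (ρ : QM N) : ℂ := ∑ v, dPfun (flipAt m v) * ρ v v

lemma trace_S1_mul (ρ : QM N) : (ghzS1 N * ρ).trace = XtrF ρ := by
  unfold Matrix.trace XtrF
  apply Finset.sum_congr rfl
  intro v _
  simp only [Matrix.diag_apply, Matrix.mul_apply, ghzS1_apply, ite_mul, one_mul, zero_mul]
  rw [Finset.sum_ite_eq' Finset.univ (flipAll v) (fun u => ρ u v)]
  simp

lemma trace_diagonal_mul (d : (Fin N → Fin 2) → ℂ) (ρ : QM N) :
    (Matrix.diagonal d * ρ).trace = ∑ v, d v * ρ v v := by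
  unfold Matrix.trace
  apply Finset.sum_congr rfl
  intro v _
  simp [Matrix.diag_apply, Matrix.diagonal_mul]

lemma trace_ghzProd_mul (hN : 0 < N) (ρ : QM N) : (ghzProd N * ρ).trace = DtrF ρ := by
  rw [ghzProd_eq hN, trace_diagonal_mul]
  rfl

-- linearity
lemma XtrF_add (A B : QM N) : XtrF (A + B) = XtrF A + XtrF B := by
  simp [XtrF, Matrix.add_apply, Finset.sum_add_distrib]
lemma XtrF_smul (c : ℂ) (A : QM N) : XtrF (c • A) = c * XtrF A := by
  simp [XtrF, Matrix.smul_apply, Finset.mul_sum, smul_eq_mul]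
lemma DtrF_add (A B : QM N) : DtrF (A + B) = DtrF A + DtrF B := by
  simp [DtrF, Matrix.add_apply, mul_add, Finset.sum_add_distrib]
lemma DtrF_smul (c : ℂ) (A : QM N) : DtrF (c • A) = c * DtrF A := by
  simp only [DtrF, Matrix.smul_apply, smul_eq_mul, Finset.mul_sum]
  apply Finset.sum_congr rfl
  intros; ring
lemma EtrF_add (m : Fin N) (A B : QM N) : EtrF m (A + B) = EtrF m A + EtrF m B := by
  simp [EtrF, Matrix.add_apply, mul_add, Finset.sum_add_distrib]
lemma EtrF_smul (m : Fin N) (c : ℂ) (A : QM N) : EtrF m (c • A) = c * EtrF m A := by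
  simp only [EtrF, Matrix.smul_apply, smul_eq_mul, Finset.mul_sum]
  apply Finset.sum_congr rfl
  intros; ring

-- the involution as an equiv
def flipAtEquiv (m : Fin N) : Equiv.Perm (Fin N → Fin 2) :=
  Function.Involutive.toPerm (flipAt m) (flipAt_flipAt m)

lemma sum_flipAt (m : Fin N) (g : (Fin N → Fin 2) → ℂ) :
    ∑ v, g (flipAt m v) = ∑ v, g v := by
  exact Equiv.sum_comp (flipAtEquiv m) g

-- conjugation identities
lemma trace_ZZ (m : Fin N) (ρ : QM N) :
    (site N m sigz * ρ * site N m sigz).trace = ρ.trace := by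
  unfold Matrix.trace
  apply Finset.sum_congr rfl
  intro v _
  simp only [Matrix.diag_apply, ZMZ_apply]
  rw [mul_right_comm, zvC_mul_self, one_mul]

lemma trace_XX (m : Fin N) (ρ : QM N) :
    (site N m sigx * ρ * site N m sigx).trace = ρ.trace := by
  unfold Matrix.trace
  simp only [Matrix.diag_apply, XMX_apply]
  exact sum_flipAt m (fun v => ρ v v)

lemma XtrF_ZZ (m : Fin N) (ρ : QM N) :
    XtrF (site N m sigz * ρ * site N m sigz) = - XtrF ρ := by
  unfold XtrF
  rw [← Finset.sum_neg_distrib]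
  apply Finset.sum_congr rfl
  intro v _
  rw [ZMZ_apply]
  have h : flipAll v m = v m + 1 := rfl
  rw [h, mul_right_comm, zvC_flip_mul]
  ring

lemma XtrF_XX (m : Fin N) (ρ : QM N) :
    XtrF (site N m sigx * ρ * site N m sigx) = XtrF ρ := by
  unfold XtrF
  simp only [XMX_apply]
  have h : ∀ v, flipAt m (flipAll v) = flipAll (flipAt m v) := fun v =>
    (flipAll_flipAt m v).symm
  simp only [h]
  exact sum_flipAt m (fun v => ρ (flipAll v) v)

lemma DtrF_ZZ (m : Fin N) (ρ : QM N) :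
    DtrF (site N m sigz * ρ * site N m sigz) = DtrF ρ := by
  unfold DtrF
  apply Finset.sum_congr rfl
  intro v _
  rw [ZMZ_apply, mul_right_comm (zvC (v m)), zvC_mul_self, one_mul]

lemma DtrF_XX (m : Fin N) (ρ : QM N) :
    DtrF (site N m sigx * ρ * site N m sigx) = EtrF m ρ := by
  unfold DtrF EtrF
  simp only [XMX_apply]
  rw [← sum_flipAt m (fun v => dPfun (flipAt m v) * ρ v v)]
  apply Finset.sum_congr rfl
  intro v _
  rw [flipAt_flipAt]

lemma EtrF_ZZ (m : Fin N) (ρ : QM N) :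
    EtrF m (site N m sigz * ρ * site N m sigz) = EtrF m ρ := by
  unfold EtrF
  apply Finset.sum_congr rfl
  intro v _
  rw [ZMZ_apply, mul_right_comm (zvC (v m)), zvC_mul_self, one_mul]

lemma EtrF_XX (m : Fin N) (ρ : QM N) :
    EtrF m (site N m sigx * ρ * site N m sigx) = DtrF ρ := by
  unfold DtrF EtrF
  simp only [XMX_apply]
  rw [← sum_flipAt m (fun v => dPfun (flipAt m v) * ρ (flipAt m v) (flipAt m v))]
  apply Finset.sum_congr rfl
  intro v _
  rw [flipAt_flipAt]

-- phiMap action on the functionals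
lemma trace_phi (m : Fin N) (lam : ℝ) (ρ : QM N) :
    (phiMap N m lam ρ).trace = ρ.trace := by
  unfold phiMap
  rw [Matrix.trace_add, Matrix.trace_add, Matrix.trace_smul, Matrix.trace_smul,
    Matrix.trace_smul, trace_ZZ, trace_XX]
  simp only [smul_eq_mul]
  push_cast
  ring

lemma XtrF_phi (m : Fin N) (lam : ℝ) (ρ : QM N) :
    XtrF (phiMap N m lam ρ) = (1/2 : ℂ) * XtrF ρ := by
  unfold phiMap
  rw [XtrF_add, XtrF_add, XtrF_smul, XtrF_smul, XtrF_smul, XtrF_ZZ, XtrF_XX]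
  push_cast
  ring

lemma DtrF_phi (m : Fin N) (lam : ℝ) (ρ : QM N) :
    DtrF (phiMap N m lam ρ)
      = (((3 + Real.sqrt (1 - lam ^ 2)) / 4 : ℝ) : ℂ) * DtrF ρ
        + (((1 - Real.sqrt (1 - lam ^ 2)) / 4 : ℝ) : ℂ) * EtrF m ρ := by
  unfold phiMap
  rw [DtrF_add, DtrF_add, DtrF_smul, DtrF_smul, DtrF_smul, DtrF_ZZ, DtrF_XX]
  push_cast
  ring

lemma EtrF_phi (m : Fin N) (lam : ℝ) (ρ : QM N) :
    EtrF m (phiMap N m lam ρ)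
      = (((3 + Real.sqrt (1 - lam ^ 2)) / 4 : ℝ) : ℂ) * EtrF m ρ
        + (((1 - Real.sqrt (1 - lam ^ 2)) / 4 : ℝ) : ℂ) * DtrF ρ := by
  unfold phiMap
  rw [EtrF_add, EtrF_add, EtrF_smul, EtrF_smul, EtrF_smul, EtrF_ZZ, EtrF_XX]
  push_cast
  ring

end Aux3
section Aux4
open Finset

variable {N : ℕ}

def e0v : Fin N → Fin 2 := fun _ => 0
def e1v : Fin N → Fin 2 := fun _ => 1

lemma e0v_ne_e1v (hN : 0 < N) : (e0v : Fin N → Fin 2) ≠ e1v := by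
  intro h
  have := congrFun h ⟨0, hN⟩
  simp [e0v, e1v] at this

lemma flipAll_e0v : flipAll (e0v : Fin N → Fin 2) = e1v := by
  funext i; rfl

lemma flipAll_e1v : flipAll (e1v : Fin N → Fin 2) = e0v := by
  funext i; rfl

lemma dPfun_e0v : dPfun (e0v : Fin N → Fin 2) = 1 := if_pos (fun _ _ => rfl)
lemma dPfun_e1v : dPfun (e1v : Fin N → Fin 2) = 1 := if_pos (fun _ _ => rfl)

lemma dPfun_eq_zero (hN : 0 < N) (v : Fin N → Fin 2) (h0 : v ≠ e0v) (h1 : v ≠ e1v) :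
    dPfun v = 0 := by
  rw [dPfun, if_neg]
  intro hc
  rcases bit01 (v ⟨0, hN⟩) with hb | hb
  · exact h0 (funext fun i => (hc i ⟨0, hN⟩).trans hb)
  · exact h1 (funext fun i => (hc i ⟨0, hN⟩).trans hb)

lemma dPfun_flipAt_e0v (hN : 2 ≤ N) (m : Fin N) :
    dPfun (flipAt m (e0v : Fin N → Fin 2)) = 0 := by
  rw [dPfun, if_neg]
  intro hc
  have hj : ∃ j : Fin N, j ≠ m := by
    by_cases h : m = ⟨0, by omega⟩
    · exact ⟨⟨1, by omega⟩, by rw [h]; simp [Fin.ext_iff]⟩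
    · exact ⟨⟨0, by omega⟩, fun hc' => h hc'.symm⟩
  obtain ⟨j, hjm⟩ := hj
  have h1 := hc m j
  rw [show flipAt m (e0v : Fin N → Fin 2) m = 1 from by
      simp [flipAt, e0v],
    show flipAt m (e0v : Fin N → Fin 2) j = 0 from by
      simp [flipAt, Function.update_of_ne hjm, e0v]] at h1
  exact one_ne_zero h1

lemma dPfun_flipAt_e1v (hN : 2 ≤ N) (m : Fin N) :
    dPfun (flipAt m (e1v : Fin N → Fin 2)) = 0 := by
  rw [dPfun, if_neg]
  intro hc
  have hj : ∃ j : Fin N, j ≠ m := by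
    by_cases h : m = ⟨0, by omega⟩
    · exact ⟨⟨1, by omega⟩, by rw [h]; simp [Fin.ext_iff]⟩
    · exact ⟨⟨0, by omega⟩, fun hc' => h hc'.symm⟩
  obtain ⟨j, hjm⟩ := hj
  have h1 := hc m j
  rw [show flipAt m (e1v : Fin N → Fin 2) m = 0 from by
      simp [flipAt, e1v, show (1 : Fin 2) + 1 = 0 from rfl],
    show flipAt m (e1v : Fin N → Fin 2) j = 1 from by
      simp [flipAt, Function.update_of_ne hjm, e1v]] at h1
  exact zero_ne_one h1

lemma sum_two (hN : 0 < N) (f : (Fin N → Fin 2) → ℂ)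
    (h : ∀ v, v ≠ e0v → v ≠ e1v → f v = 0) :
    ∑ v, f v = f e0v + f e1v := by
  classical
  rw [← Finset.sum_subset (Finset.subset_univ ({e0v, e1v} : Finset (Fin N → Fin 2)))]
  · rw [Finset.sum_pair (e0v_ne_e1v hN)]
  · intro v _ hv
    simp only [Finset.mem_insert, Finset.mem_singleton, not_or] at hv
    exact h v hv.1 hv.2

lemma outer_apply (ψ : (Fin N → Fin 2) → ℂ) (v w : Fin N → Fin 2) :
    outer N ψ v w = ψ v * (starRingEnd ℂ) (ψ w) := by
  simp [outer, Matrix.vecMulVec_apply, Pi.star_apply, Complex.star_def]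

-- functionals of an outer product supported on {e0v, e1v}
lemma trace_outer (hN : 0 < N) (ψ : (Fin N → Fin 2) → ℂ)
    (h : ∀ v, v ≠ e0v → v ≠ e1v → ψ v = 0) :
    (outer N ψ).trace
      = ψ e0v * (starRingEnd ℂ) (ψ e0v) + ψ e1v * (starRingEnd ℂ) (ψ e1v) := by
  unfold Matrix.trace
  rw [sum_two hN _ (fun v h0 h1 => by
    simp [Matrix.diag_apply, outer_apply, h v h0 h1])]
  simp [Matrix.diag_apply, outer_apply]

lemma XtrF_outer (hN : 0 < N) (ψ : (Fin N → Fin 2) → ℂ)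
    (h : ∀ v, v ≠ e0v → v ≠ e1v → ψ v = 0) :
    XtrF (outer N ψ)
      = ψ e1v * (starRingEnd ℂ) (ψ e0v) + ψ e0v * (starRingEnd ℂ) (ψ e1v) := by
  unfold XtrF
  rw [sum_two hN _ (fun v h0 h1 => by
    simp [outer_apply, h v h0 h1])]
  rw [flipAll_e0v, flipAll_e1v, outer_apply, outer_apply]

lemma DtrF_outer (hN : 0 < N) (ψ : (Fin N → Fin 2) → ℂ)
    (h : ∀ v, v ≠ e0v → v ≠ e1v → ψ v = 0) :
    DtrF (outer N ψ)
      = ψ e0v * (starRingEnd ℂ) (ψ e0v) + ψ e1v * (starRingEnd ℂ) (ψ e1v) := by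
  unfold DtrF
  rw [sum_two hN _ (fun v h0 h1 => by
    simp [outer_apply, h v h0 h1])]
  rw [dPfun_e0v, dPfun_e1v, outer_apply, outer_apply, one_mul, one_mul]

lemma EtrF_outer (hN : 2 ≤ N) (m : Fin N) (ψ : (Fin N → Fin 2) → ℂ)
    (h : ∀ v, v ≠ e0v → v ≠ e1v → ψ v = 0) :
    EtrF m (outer N ψ) = 0 := by
  unfold EtrF
  rw [sum_two (by omega) _ (fun v h0 h1 => by
    simp [outer_apply, h v h0 h1])]
  rw [dPfun_flipAt_e0v hN, dPfun_flipAt_e1v hN, zero_mul, zero_mul, add_zero]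

-- vector values
lemma genGhzVec_e0v (α : ℝ) : genGhzVec N α e0v = ((Real.sqrt α : ℝ) : ℂ) :=
  if_pos (fun _ => rfl)

lemma genGhzVec_e1v (hN : 0 < N) (α : ℝ) :
    genGhzVec N α e1v = ((Real.sqrt (1 - α) : ℝ) : ℂ) := by
  unfold genGhzVec
  have hno : ¬ ∀ i : Fin N, e1v i = 0 := by
    intro hc
    have := hc ⟨0, hN⟩
    simp [e1v] at this
  rw [if_neg hno, if_pos (show ∀ i : Fin N, e1v i = 1 from fun _ => rfl)]

lemma genGhzVec_zero (α : ℝ) (v : Fin N → Fin 2) (h0 : v ≠ e0v) (h1 : v ≠ e1v) :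
    genGhzVec N α v = 0 := by
  unfold genGhzVec
  rw [if_neg (show ¬ ∀ i, v i = 0 from fun hc => h0 (funext fun i => hc i)),
    if_neg (show ¬ ∀ i, v i = 1 from fun hc => h1 (funext fun i => hc i))]

lemma allZero_e0v : allZero N e0v = 1 := if_pos (fun _ => rfl)
lemma allOne_e1v : allOne N e1v = 1 := if_pos (fun _ => rfl)

lemma allZero_e1v (hN : 0 < N) : allZero N e1v = 0 := by
  unfold allZero
  rw [if_neg]
  intro hc
  have := hc ⟨0, hN⟩
  simp [e1v] at this

lemma allOne_e0v (hN : 0 < N) : allOne N e0v = 0 := by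
  unfold allOne
  rw [if_neg]
  intro hc
  have := hc ⟨0, hN⟩
  simp [e0v] at this

lemma allZero_zero (v : Fin N → Fin 2) (h0 : v ≠ e0v) : allZero N v = 0 := by
  unfold allZero
  rw [if_neg (show ¬ ∀ i, v i = 0 from fun hc => h0 (funext fun i => hc i))]

lemma allOne_zero (v : Fin N → Fin 2) (h1 : v ≠ e1v) : allOne N v = 0 := by
  unfold allOne
  rw [if_neg (show ¬ ∀ i, v i = 1 from fun hc => h1 (funext fun i => hc i))]

end Aux4
section Aux5
open Finset

variable {N : ℕ}

lemma mixed_trace (hN : 0 < N) {α p₁ p₂ p₃ : ℝ} (hα0 : 0 ≤ α) (hα1 : α ≤ 1)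
    (hsum : p₁ + p₂ + p₃ = 1) :
    (mixedState N α p₁ p₂ p₃).trace = 1 := by
  rw [mixedState, Matrix.trace_add, Matrix.trace_add, Matrix.trace_smul, Matrix.trace_smul,
    Matrix.trace_smul, trace_outer hN _ (genGhzVec_zero α),
    trace_outer hN _ (fun v h0 _ => allZero_zero v h0),
    trace_outer hN _ (fun v _ h1 => allOne_zero v h1),
    genGhzVec_e0v, genGhzVec_e1v hN, allZero_e0v, allZero_e1v hN, allOne_e0v hN, allOne_e1v]
  simp only [map_zero, mul_zero, zero_mul, _root_.map_one, mul_one, add_zero, zero_add,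
    Complex.conj_ofReal, smul_eq_mul]
  rw [← Complex.ofReal_mul, Real.mul_self_sqrt hα0, ← Complex.ofReal_mul,
    Real.mul_self_sqrt (by linarith)]
  have hs := congrArg (Complex.ofReal) hsum
  push_cast at hs ⊢
  linear_combination hs

lemma mixed_D (hN : 0 < N) {α p₁ p₂ p₃ : ℝ} (hα0 : 0 ≤ α) (hα1 : α ≤ 1)
    (hsum : p₁ + p₂ + p₃ = 1) :
    DtrF (mixedState N α p₁ p₂ p₃) = 1 := by
  rw [mixedState, DtrF_add, DtrF_add, DtrF_smul, DtrF_smul, DtrF_smul,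
    DtrF_outer hN _ (genGhzVec_zero α),
    DtrF_outer hN _ (fun v h0 _ => allZero_zero v h0),
    DtrF_outer hN _ (fun v _ h1 => allOne_zero v h1),
    genGhzVec_e0v, genGhzVec_e1v hN, allZero_e0v, allZero_e1v hN, allOne_e0v hN, allOne_e1v]
  simp only [map_zero, mul_zero, zero_mul, _root_.map_one, mul_one, add_zero, zero_add,
    Complex.conj_ofReal]
  rw [← Complex.ofReal_mul, Real.mul_self_sqrt hα0, ← Complex.ofReal_mul,
    Real.mul_self_sqrt (by linarith)]
  have hs := congrArg (Complex.ofReal) hsum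
  push_cast at hs ⊢
  linear_combination hs

lemma mixed_X (hN : 0 < N) {α p₁ p₂ p₃ : ℝ} (hα0 : 0 ≤ α) :
    XtrF (mixedState N α p₁ p₂ p₃)
      = ((2 * p₁ * Real.sqrt (α * (1 - α)) : ℝ) : ℂ) := by
  rw [mixedState, XtrF_add, XtrF_add, XtrF_smul, XtrF_smul, XtrF_smul,
    XtrF_outer hN _ (genGhzVec_zero α),
    XtrF_outer hN _ (fun v h0 _ => allZero_zero v h0),
    XtrF_outer hN _ (fun v _ h1 => allOne_zero v h1),
    genGhzVec_e0v, genGhzVec_e1v hN, allZero_e0v, allZero_e1v hN, allOne_e0v hN, allOne_e1v]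
  simp only [map_zero, mul_zero, zero_mul, _root_.map_one, mul_one, add_zero, zero_add,
    Complex.conj_ofReal]
  rw [Real.sqrt_mul hα0]
  push_cast
  ring

lemma mixed_E (hN : 2 ≤ N) (m : Fin N) {α p₁ p₂ p₃ : ℝ} :
    EtrF m (mixedState N α p₁ p₂ p₃) = 0 := by
  rw [mixedState, EtrF_add, EtrF_add, EtrF_smul, EtrF_smul, EtrF_smul,
    EtrF_outer hN m _ (genGhzVec_zero α),
    EtrF_outer hN m _ (fun v h0 _ => allZero_zero v h0),
    EtrF_outer hN m _ (fun v _ h1 => allOne_zero v h1)]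
  simp

end Aux5

/-- Fix an integer `N ≥ 3`, parameters `λ_1, λ_2, …` in `[0,1]`, and
let `ρ_1 = p_1|ψ⟩⟨ψ| + p_2|0…0⟩⟨0…0| + p_3|1…1⟩⟨1…1|` with
`|ψ⟩ = √α|0…0⟩ + √(1−α)|1…1⟩`, `α ∈ (0,1)`, `p_1 > 0`, `p_2, p_3 ≥ 0`,
`p_1+p_2+p_3 = 1`, and `ρ_k = (id ⊗ Φ_{λ_{k−1}})(ρ_{k−1})` for `k ≥ 2` (the map acting
on the `N`-th qubit). Then for every `k ≥ 1`,
`Tr(W^{λ_k} ρ_k) = 1 − ∏_{j=1}^{k−1} (1+√(1−λ_j²))/2 − 2p_1√(α(1−α))·λ_k/2^{k−1}`;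
hence `Tr(W^{λ_k} ρ_k) < 0` if and only if
`λ_k > (2^{k−1}/(2p_1√(α(1−α))))·[1 − ∏_{j=1}^{k−1} (1+√(1−λ_j²))/2]`. -/
theorem mixedState_sequential_witness_trace
    (N : ℕ) (hN : 3 ≤ N) (α : ℝ) (hα : α ∈ Set.Ioo (0 : ℝ) 1)
    (p₁ p₂ p₃ : ℝ) (hp₁ : 0 < p₁) (hp₂ : 0 ≤ p₂) (hp₃ : 0 ≤ p₃)
    (hsum : p₁ + p₂ + p₃ = 1)
    (lam : ℕ → ℝ) (hlam : ∀ j, lam j ∈ Set.Icc (0 : ℝ) 1)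
    (ρ : ℕ → QM N)
    (hinit : ρ 1 = mixedState N α p₁ p₂ p₃)
    (hrec : ∀ k, 1 ≤ k → ρ (k + 1) = phiMap N ⟨N - 1, by omega⟩ (lam k) (ρ k)) :
    ∀ k, 1 ≤ k →
      (ghzWitnessMod N (lam k) * ρ k).trace
        = ((1 - ∏ j ∈ Finset.Icc 1 (k - 1), (1 + Real.sqrt (1 - lam j ^ 2)) / 2
            - 2 * p₁ * Real.sqrt (α * (1 - α)) * lam k / 2 ^ (k - 1) : ℝ) : ℂ) ∧
      (((ghzWitnessMod N (lam k) * ρ k).trace).re < 0 ↔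
        lam k > (2 : ℝ) ^ (k - 1) / (2 * p₁ * Real.sqrt (α * (1 - α)))
          * (1 - ∏ j ∈ Finset.Icc 1 (k - 1), (1 + Real.sqrt (1 - lam j ^ 2)) / 2)) := by
  obtain ⟨hα0, hα1⟩ := hα
  have hN0 : 0 < N := by omega
  have hN2 : 2 ≤ N := by omega
  set mIdx : Fin N := ⟨N - 1, by omega⟩ with hmIdx
  have hrec' : ∀ k, 1 ≤ k → ρ (k + 1) = phiMap N mIdx (lam k) (ρ k) := hrec
  -- the key invariant
  have key : ∀ k, 1 ≤ k →
      (ρ k).trace = 1 ∧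
      XtrF (ρ k) = ((2 * p₁ * Real.sqrt (α * (1 - α)) / 2 ^ (k - 1) : ℝ) : ℂ) ∧
      DtrF (ρ k) = (((1 + ∏ j ∈ Finset.Icc 1 (k - 1),
          (1 + Real.sqrt (1 - lam j ^ 2)) / 2) / 2 : ℝ) : ℂ) ∧
      EtrF mIdx (ρ k) = (((1 - ∏ j ∈ Finset.Icc 1 (k - 1),
          (1 + Real.sqrt (1 - lam j ^ 2)) / 2) / 2 : ℝ) : ℂ) := by
    intro k hk
    induction k, hk using Nat.le_induction with
    | base =>
        rw [hinit]
        refine ⟨mixed_trace hN0 hα0.le hα1.le hsum, ?_, ?_, ?_⟩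
        · rw [mixed_X hN0 hα0.le]
          norm_num
        · rw [mixed_D hN0 hα0.le hα1.le hsum]
          norm_num
        · rw [mixed_E hN2 mIdx]
          norm_num
    | succ n hn ih =>
        obtain ⟨hT, hX, hD, hE⟩ := ih
        obtain ⟨j, rfl⟩ : ∃ j, n = j + 1 := ⟨n - 1, by omega⟩
        rw [hrec' (j + 1) (by omega)]
        have hπ : ∏ i ∈ Finset.Icc 1 (j + 1 + 1 - 1),
            (1 + Real.sqrt (1 - lam i ^ 2)) / 2
            = (∏ i ∈ Finset.Icc 1 (j + 1 - 1), (1 + Real.sqrt (1 - lam i ^ 2)) / 2)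
              * ((1 + Real.sqrt (1 - lam (j + 1) ^ 2)) / 2) := by
          simp only [Nat.add_sub_cancel]
          exact Finset.prod_Icc_succ_top (by omega) _
        refine ⟨?_, ?_, ?_, ?_⟩
        · rw [trace_phi, hT]
        · rw [XtrF_phi, hX]
          simp only [Nat.add_sub_cancel]
          push_cast
          rw [pow_succ]
          ring
        · rw [DtrF_phi, hD, hE, hπ]
          simp only [Nat.add_sub_cancel]
          push_cast
          ring
        · rw [EtrF_phi, hE, hD, hπ]
          simp only [Nat.add_sub_cancel]
          push_cast
          ring
  intro k hk
  obtain ⟨hT, hX, hD, _⟩ := key k hk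
  have hW : ghzWitnessMod N (lam k) * ρ k
      = (2 : ℂ) • ρ k - (lam k : ℂ) • (ghzS1 N * ρ k) - (2 : ℂ) • (ghzProd N * ρ k) := by
    simp only [ghzWitnessMod, Matrix.sub_mul, Matrix.add_mul, Matrix.smul_mul, Matrix.one_mul]
    module
  have htrace : (ghzWitnessMod N (lam k) * ρ k).trace
      = ((1 - ∏ j ∈ Finset.Icc 1 (k - 1), (1 + Real.sqrt (1 - lam j ^ 2)) / 2
          - 2 * p₁ * Real.sqrt (α * (1 - α)) * lam k / 2 ^ (k - 1) : ℝ) : ℂ) := by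
    rw [hW, Matrix.trace_sub, Matrix.trace_sub, Matrix.trace_smul, Matrix.trace_smul,
      Matrix.trace_smul, hT, trace_S1_mul, hX, trace_ghzProd_mul hN0, hD]
    simp only [smul_eq_mul]
    push_cast
    ring
  refine ⟨htrace, ?_⟩
  rw [htrace, Complex.ofReal_re]
  have hc : (0 : ℝ) < 2 * p₁ * Real.sqrt (α * (1 - α)) := by
    have : (0 : ℝ) < Real.sqrt (α * (1 - α)) :=
      Real.sqrt_pos.mpr (mul_pos hα0 (by linarith))
    positivity
  have hTpos : (0 : ℝ) < (2 : ℝ) ^ (k - 1) := by positivity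
  rw [gt_iff_lt, div_mul_eq_mul_div, div_lt_iff₀ hc, sub_neg, lt_div_iff₀ hTpos]
  constructor <;> intro h <;> nlinarith [h]

end
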